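/- Let R be an integral domain, X an indeterminate, and R(X) = {f/g : f, g ∈ R[X], the content ideal c(g) = R} the Nagata ring. For every nonzero ideal I of R, (R(X) : I·R(X)) = (R : I)·R(X); consequently I is divisorial in R if and only if I·R(X) is divisorial in R(X). -/

import Mathlib

/-- An ideal is divisorial if `I = (R : (R : I))`, phrased via fractional ideals. -/
def IsDivisorial (R : Type*) [CommRing R] [IsDomain R] (I : Ideal R) : Prop :=
  (1 / (1 / (I : FractionalIdeal (nonZeroDivisors R) (FractionRing R))) :
    FractionalIdeal (nonZeroDivisors R) (FractionRing R))
    = (I : FractionalIdeal (nonZeroDivisors R) (FractionRing R))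

/-- An ideal is invertible if it is a unit as a fractional ideal. -/
def IsInvertibleIdeal (R : Type*) [CommRing R] [IsDomain R] (I : Ideal R) : Prop :=
  IsUnit (I : FractionalIdeal (nonZeroDivisors R) (FractionRing R))

/-- A Prüfer domain: every nonzero finitely generated ideal is invertible. -/
def IsPrufer (R : Type*) [CommRing R] [IsDomain R] : Prop :=
  ∀ I : Ideal R, I ≠ ⊥ → I.FG → IsInvertibleIdeal R I

/-- A prime `P` is sharp if it contains a finitely generated ideal contained
only in the maximal ideals that contain `P`. -/
def IsSharp (R : Type*) [CommRing R] (P : Ideal R) : Prop :=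
  ∃ I : Ideal R, I.FG ∧ I ≤ P ∧ ∀ M : Ideal R, M.IsMaximal → I ≤ M → P ≤ M
/-- The multiplicative set of `R[X]` generated by the polynomials with unit
content ideal. -/
noncomputable def nagataSubmonoid (R : Type*) [CommRing R] : Submonoid (Polynomial R) :=
  Submonoid.closure {g | Ideal.span (Set.range g.coeff) = ⊤}

/-- The Nagata ring `R(X)`. -/
abbrev NagataRing (R : Type*) [CommRing R] := Localization (nagataSubmonoid R)

/-- The canonical map `R → R(X)`. -/
noncomputable def nagataMap (R : Type*) [CommRing R] : R →+* NagataRing R :=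
  (algebraMap (Polynomial R) (NagataRing R)).comp Polynomial.C

theorem nagataSubmonoid_le_nonZeroDivisors (R : Type*) [CommRing R] [IsDomain R] :
    nagataSubmonoid R ≤ nonZeroDivisors (Polynomial R) := by
  rw [nagataSubmonoid, Submonoid.closure_le]
  intro g hg
  refine mem_nonZeroDivisors_of_ne_zero ?_
  rintro rfl
  simp only [Set.mem_setOf_eq] at hg
  have : Ideal.span (Set.range (0 : Polynomial R).coeff) = ⊥ := by
    rw [Ideal.span_eq_bot]
    rintro x ⟨n, rfl⟩
    simp
  rw [this] at hg
  exact bot_ne_top hg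

noncomputable instance instNagataDomain (R : Type*) [CommRing R] [IsDomain R] :
    IsDomain (NagataRing R) :=
  IsLocalization.isDomain_localization (nagataSubmonoid_le_nonZeroDivisors R)

open Polynomial

/-- A polynomial with unit content ideal is a nonzerodivisor (any comm ring). -/
theorem mem_nzd_of_content_top {B : Type*} [CommRing B] (s : B[X])
    (h : Ideal.span (Set.range s.coeff) = ⊤) : s ∈ nonZeroDivisors B[X] := by
  rw [Polynomial.mem_nonZeroDivisors_iff]
  intro a ha
  have hker : Ideal.span (Set.range s.coeff) ≤ LinearMap.ker (LinearMap.mulLeft B a) := by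
    rw [Ideal.span_le]
    rintro x ⟨n, rfl⟩
    simp only [SetLike.mem_coe, LinearMap.mem_ker, LinearMap.mulLeft_apply]
    have := congrArg (fun q => Polynomial.coeff q n) ha
    simpa [Polynomial.coeff_smul, smul_eq_mul] using this
  rw [h, top_le_iff] at hker
  have h1 : (1 : B) ∈ LinearMap.ker (LinearMap.mulLeft B a) := hker ▸ Submodule.mem_top
  simpa using h1

/-- Content ideals of products of unit-content polynomials are unit. -/
theorem content_top_mul {B : Type*} [CommRing B] {f g : B[X]}
    (hf : Ideal.span (Set.range f.coeff) = ⊤) (hg : Ideal.span (Set.range g.coeff) = ⊤) :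
    Ideal.span (Set.range (f * g).coeff) = ⊤ := by
  by_contra h
  obtain ⟨M, hM, hle⟩ := Ideal.exists_le_maximal _ h
  letI := hM
  letI : Field (B ⧸ M) := Ideal.Quotient.field M
  have hmap : (f * g).map (Ideal.Quotient.mk M) = 0 := by
    ext n
    rw [Polynomial.coeff_map, Polynomial.coeff_zero, Ideal.Quotient.eq_zero_iff_mem]
    exact hle (Ideal.subset_span ⟨n, rfl⟩)
  rw [Polynomial.map_mul, mul_eq_zero] at hmap
  have key : ∀ p : B[X], Ideal.span (Set.range p.coeff) = ⊤ →
      p.map (Ideal.Quotient.mk M) ≠ 0 := by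
    intro p hp hc
    apply hM.ne_top
    rw [eq_top_iff, ← hp, Ideal.span_le]
    rintro x ⟨n, rfl⟩
    have := congrArg (fun q => Polynomial.coeff q n) hc
    simp only [Polynomial.coeff_map, Polynomial.coeff_zero] at this
    exact Ideal.Quotient.eq_zero_iff_mem.mp this
  rcases hmap with hmap | hmap
  · exact key f hf hmap
  · exact key g hg hmap

theorem content_top_of_mem_nagataSubmonoid {B : Type*} [CommRing B] {s : B[X]}
    (hs : s ∈ nagataSubmonoid B) : Ideal.span (Set.range s.coeff) = ⊤ := by
  induction hs using Submonoid.closure_induction with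
  | mem x hx => exact hx
  | one =>
      rw [Ideal.eq_top_iff_one]
      exact Ideal.subset_span ⟨0, coeff_one_zero⟩
  | mul x y _ _ hx hy => exact content_top_mul hx hy

/-- The key "Dedekind–Mertens style" divisibility lemma. -/
theorem dvd_coeff_of_dvd_coeff_mul {R : Type*} [CommRing R] (a : R) (r t : R[X])
    (ht : Ideal.span (Set.range t.coeff) = ⊤)
    (h : ∀ n, a ∣ (r * t).coeff n) : ∀ n, a ∣ r.coeff n := by
  set M := Ideal.span ({a} : Set R)
  have hmap : (r * t).map (Ideal.Quotient.mk M) = 0 := by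
    ext n
    rw [Polynomial.coeff_map, Polynomial.coeff_zero, Ideal.Quotient.eq_zero_iff_mem]
    exact Ideal.mem_span_singleton.mpr (h n)
  have htc : Ideal.span (Set.range (t.map (Ideal.Quotient.mk M)).coeff) = ⊤ := by
    have hrange : Set.range (t.map (Ideal.Quotient.mk M)).coeff
        = (Ideal.Quotient.mk M) '' Set.range t.coeff := by
      have : (t.map (Ideal.Quotient.mk M)).coeff = (Ideal.Quotient.mk M) ∘ t.coeff := by
        funext n; simp [Polynomial.coeff_map]
      rw [this, Set.range_comp]
    rw [hrange, ← Ideal.map_span, ht, Ideal.map_top]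
  have hnzd := mem_nzd_of_content_top _ htc
  have hr0 : r.map (Ideal.Quotient.mk M) = 0 := by
    have := hnzd.2 (r.map (Ideal.Quotient.mk M)) (by rw [← Polynomial.map_mul, hmap])
    exact this
  intro n
  have := congrArg (fun q => Polynomial.coeff q n) hr0
  simp only [Polynomial.coeff_map, Polynomial.coeff_zero] at this
  exact Ideal.mem_span_singleton.mp (Ideal.Quotient.eq_zero_iff_mem.mp this)

/-- If `z * c ∈ N` for all coefficients `c` of a unit-content polynomial, then `z ∈ N`. -/
theorem mem_of_forall_coeff_mul_mem {R : Type*} [CommRing R] [IsDomain R] {s : Polynomial R}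
    (hs : Ideal.span (Set.range s.coeff) = ⊤) {N : Submodule R (FractionRing R)}
    {z : FractionRing R}
    (h : ∀ n, z * algebraMap R (FractionRing R) (s.coeff n) ∈ N) : z ∈ N := by
  have h1 : (1 : R) ∈ Ideal.span (Set.range s.coeff) := by rw [hs]; trivial
  rcases Submodule.mem_span_set'.mp h1 with ⟨n, f, g, hsum⟩
  have hz : z = ∑ i, f i • (z * algebraMap R (FractionRing R) (g i : R)) := by
    have : z * algebraMap R (FractionRing R) (∑ i, f i • (g i : R)) =
        ∑ i, f i • (z * algebraMap R (FractionRing R) (g i : R)) := by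
      rw [map_sum, Finset.mul_sum]
      refine Finset.sum_congr rfl fun i _ => ?_
      rw [smul_eq_mul, map_mul, Algebra.smul_def]
      ring
    rw [hsum] at this
    simp only [map_one, mul_one] at this
    exact this
  rw [hz]
  refine Submodule.sum_mem _ fun i _ => Submodule.smul_mem _ _ ?_
  obtain ⟨m, hm⟩ := (g i).2
  exact hm ▸ h m

/-- Contraction: if `φ z` lies in `I·R(X)` then `z ∈ I` (as fractional ideals). -/
theorem contraction {R : Type*} [CommRing R] [IsDomain R] (I : Ideal R)
    (φ : FractionRing R →+* FractionRing (NagataRing R))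
    (hφ : ∀ r : R, φ (algebraMap R (FractionRing R) r)
        = algebraMap (NagataRing R) (FractionRing (NagataRing R)) (nagataMap R r))
    (z : FractionRing R)
    (hz : φ z ∈ ((I.map (nagataMap R) : Ideal (NagataRing R)) :
      FractionalIdeal (nonZeroDivisors (NagataRing R)) (FractionRing (NagataRing R)))) :
    z ∈ (I : FractionalIdeal (nonZeroDivisors R) (FractionRing R)) := by
  let K := FractionRing R
  let A := NagataRing R
  let L := FractionRing A
  set ψ : Polynomial R →+* L := (algebraMap A L).comp (algebraMap (Polynomial R) A) with hψdef
  have hψinj : Function.Injective ψ :=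
    (IsFractionRing.injective A L).comp
      (IsLocalization.injective A (nagataSubmonoid_le_nonZeroDivisors R))
  have hφC : ∀ r : R, φ (algebraMap R K r) = ψ (Polynomial.C r) := fun r => hφ r
  obtain ⟨j, hjmem, hje⟩ := (FractionalIdeal.mem_coeIdeal _).mp hz
  have hmm : I.map (nagataMap R)
      = Ideal.map (algebraMap (Polynomial R) A) (I.map Polynomial.C) := by
    rw [Ideal.map_map]; rfl
  rw [hmm] at hjmem
  obtain ⟨⟨f, s⟩, hfs⟩ := (IsLocalization.mem_map_algebraMap_iff (nagataSubmonoid R) A).mp hjmem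
  obtain ⟨b₀, d₀, hzeq⟩ := IsLocalization.exists_mk'_eq (nonZeroDivisors R) z
  have e1 : z * algebraMap R K ↑d₀ = algebraMap R K b₀ := by
    rw [← hzeq]; exact IsLocalization.mk'_spec K b₀ d₀
  have e2 : ψ (Polynomial.C b₀ * ↑s) = ψ (Polynomial.C (d₀ : R) * ↑f) := by
    have hψs : ψ (↑s : Polynomial R) = algebraMap A L (algebraMap (Polynomial R) A ↑s) := rfl
    have hψf : ψ (↑f : Polynomial R) = algebraMap A L (algebraMap (Polynomial R) A ↑f) := rfl
    calc ψ (Polynomial.C b₀ * ↑s) = φ (algebraMap R K b₀) * ψ ↑s := by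
            rw [map_mul, hφC]
      _ = φ z * ψ (Polynomial.C (d₀ : R)) * ψ ↑s := by rw [← e1, map_mul, hφC]
      _ = algebraMap A L j * ψ ↑s * ψ (Polynomial.C (d₀ : R)) := by rw [hje]; ring
      _ = algebraMap A L (j * algebraMap (Polynomial R) A ↑s) * ψ (Polynomial.C (d₀ : R)) := by
            rw [map_mul, hψs]
      _ = ψ ↑f * ψ (Polynomial.C (d₀ : R)) := by rw [hfs, hψf]
      _ = ψ (Polynomial.C (d₀ : R) * ↑f) := by rw [map_mul]; ring
  have e3 : Polynomial.C b₀ * (↑s : Polynomial R) = Polynomial.C (d₀ : R) * ↑f := hψinj e2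
  have hcoeff : ∀ n, b₀ * (↑s : Polynomial R).coeff n = ↑d₀ * (↑f : Polynomial R).coeff n := by
    intro n
    have := congrArg (fun q => Polynomial.coeff q n) e3
    simpa [Polynomial.coeff_C_mul] using this
  have hd₀ : algebraMap R K ↑d₀ ≠ 0 :=
    IsFractionRing.to_map_ne_zero_of_mem_nonZeroDivisors d₀.2
  have hzs : ∀ n, z * algebraMap R K ((↑s : Polynomial R).coeff n)
      = algebraMap R K ((↑f : Polynomial R).coeff n) := by
    intro n
    apply mul_right_cancel₀ hd₀
    calc z * algebraMap R K ((↑s : Polynomial R).coeff n) * algebraMap R K ↑d₀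
        = algebraMap R K ((↑s : Polynomial R).coeff n) * (z * algebraMap R K ↑d₀) := by ring
      _ = algebraMap R K (b₀ * (↑s : Polynomial R).coeff n) := by rw [e1, map_mul]; ring
      _ = algebraMap R K (↑d₀ * (↑f : Polynomial R).coeff n) := by rw [hcoeff]
      _ = algebraMap R K ((↑f : Polynomial R).coeff n) * algebraMap R K ↑d₀ := by
            rw [map_mul]; ring
  rw [← FractionalIdeal.mem_coe]
  refine mem_of_forall_coeff_mul_mem (content_top_of_mem_nagataSubmonoid s.2) fun n => ?_
  rw [hzs n]
  exact FractionalIdeal.mem_coe.mpr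
    ((FractionalIdeal.mem_coeIdeal _).mpr
      ⟨_, Ideal.mem_map_C_iff.mp f.2 n, rfl⟩)

set_option maxHeartbeats 1000000 in
/-- Main lemma: `(R(X) : M R(X)) = (R : M) R(X)` at the level of submodules. -/
theorem nagata_div_span {R : Type*} [CommRing R] [IsDomain R]
    (φ : FractionRing R →+* FractionRing (NagataRing R))
    (hφ : ∀ r : R, φ (algebraMap R (FractionRing R) r)
        = algebraMap (NagataRing R) (FractionRing (NagataRing R)) (nagataMap R r))
    (M : Submodule R (FractionRing R)) (hM : M ≠ ⊥) :
    (1 : Submodule (NagataRing R) (FractionRing (NagataRing R))) /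
        Submodule.span (NagataRing R) (φ '' M)
      = Submodule.span (NagataRing R) (φ '' ((1 : Submodule R (FractionRing R)) / M)) := by
  set ψ : Polynomial R →+* FractionRing (NagataRing R) :=
    (algebraMap (NagataRing R) (FractionRing (NagataRing R))).comp
      (algebraMap (Polynomial R) (NagataRing R)) with hψdef
  have hψinj : Function.Injective ψ :=
    (IsFractionRing.injective (NagataRing R) (FractionRing (NagataRing R))).comp
      (IsLocalization.injective (NagataRing R) (nagataSubmonoid_le_nonZeroDivisors R))
  have hφC : ∀ r : R, φ (algebraMap R (FractionRing R) r) = ψ (Polynomial.C r) := fun r => hφ r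
  have hψs_ne : ∀ s : nagataSubmonoid R, ψ (s : Polynomial R) ≠ 0 := fun s =>
    (((IsLocalization.map_units (NagataRing R) s).map
      (algebraMap (NagataRing R) (FractionRing (NagataRing R))))).ne_zero
  have hιinj : Function.Injective (algebraMap R (FractionRing R)) := IsFractionRing.injective _ _
  refine le_antisymm ?_ ?_
  · -- hard direction
    intro x hx
    rw [Submodule.mem_div_iff_forall_mul_mem] at hx
    have hxM : ∀ m ∈ M, ∃ h : NagataRing R,
        algebraMap (NagataRing R) (FractionRing (NagataRing R)) h = x * φ m := fun m hm =>
      Submodule.mem_one.mp (hx (φ m) (Submodule.subset_span ⟨m, hm, rfl⟩))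
    obtain ⟨m₀, hm₀M, hm₀⟩ := (Submodule.ne_bot_iff M).mp hM
    obtain ⟨b, d, hbd⟩ := IsLocalization.exists_mk'_eq (nonZeroDivisors R) m₀
    have e1 : m₀ * algebraMap R (FractionRing R) ↑d = algebraMap R (FractionRing R) b := by
      rw [← hbd]; exact IsLocalization.mk'_spec _ b d
    have hd : algebraMap R (FractionRing R) (d : R) ≠ 0 :=
      IsFractionRing.to_map_ne_zero_of_mem_nonZeroDivisors d.2
    have hb : b ≠ 0 := by
      rintro rfl
      rw [map_zero] at e1
      exact hm₀ ((mul_eq_zero.mp e1).resolve_right hd)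
    have hιb : algebraMap R (FractionRing R) b ≠ 0 := fun h => hb (by
      have := hιinj (h.trans (map_zero _).symm); exact this)
    obtain ⟨h₀, hh₀⟩ := hxM m₀ hm₀M
    obtain ⟨p₀, s, hps⟩ := IsLocalization.exists_mk'_eq (nagataSubmonoid R) h₀
    set P : Polynomial R := p₀ * Polynomial.C (d : R) with hPdef
    have hmk : ∀ q : Polynomial R, ∀ t : nagataSubmonoid R,
        algebraMap (NagataRing R) (FractionRing (NagataRing R))
          (IsLocalization.mk' (NagataRing R) q t) * ψ (t : Polynomial R) = ψ q := by
      intro q t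
      rw [hψdef, RingHom.comp_apply, ← map_mul, IsLocalization.mk'_spec]
      rfl
    have master : x * ψ (Polynomial.C b) * ψ (s : Polynomial R) = ψ P := by
      calc x * ψ (Polynomial.C b) * ψ (s : Polynomial R)
          = x * φ (algebraMap R (FractionRing R) b) * ψ (s : Polynomial R) := by rw [hφC]
        _ = x * φ m₀ * ψ (Polynomial.C (d : R)) * ψ (s : Polynomial R) := by
              rw [← e1, map_mul, hφC]; ring
        _ = algebraMap (NagataRing R) (FractionRing (NagataRing R))
              (IsLocalization.mk' (NagataRing R) p₀ s) * ψ (s : Polynomial R)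
              * ψ (Polynomial.C (d : R)) := by rw [hps, hh₀]; ring
        _ = ψ p₀ * ψ (Polynomial.C (d : R)) := by rw [hmk]
        _ = ψ P := by rw [hPdef, map_mul]
    have claimA : ∀ n, (algebraMap R (FractionRing R) (P.coeff n))
        / (algebraMap R (FractionRing R) b) ∈ (1 : Submodule R (FractionRing R)) / M := by
      intro n
      rw [Submodule.mem_div_iff_forall_mul_mem]
      intro m hm
      obtain ⟨h₁, hh₁⟩ := hxM m hm
      obtain ⟨q, t, hqt⟩ := IsLocalization.exists_mk'_eq (nagataSubmonoid R) h₁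
      obtain ⟨c, e, hce⟩ := IsLocalization.exists_mk'_eq (nonZeroDivisors R) m
      have ece : m * algebraMap R (FractionRing R) ↑e = algebraMap R (FractionRing R) c := by
        rw [← hce]; exact IsLocalization.mk'_spec _ c e
      have he : algebraMap R (FractionRing R) (e : R) ≠ 0 :=
        IsFractionRing.to_map_ne_zero_of_mem_nonZeroDivisors e.2
      have key : ψ (P * Polynomial.C c * (t : Polynomial R))
          = ψ (Polynomial.C (b * (e : R)) * (q * (s : Polynomial R))) := by
        calc ψ (P * Polynomial.C c * (t : Polynomial R))
            = ψ P * ψ (Polynomial.C c) * ψ (t : Polynomial R) := by rw [map_mul, map_mul]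
          _ = (x * ψ (Polynomial.C b) * ψ (s : Polynomial R))
                * φ (algebraMap R (FractionRing R) c) * ψ (t : Polynomial R) := by
                rw [master, hφC]
          _ = (x * φ m) * ψ (t : Polynomial R)
                * (ψ (Polynomial.C b) * ψ (Polynomial.C (e : R)) * ψ (s : Polynomial R)) := by
                rw [← ece, map_mul, hφC]; ring
          _ = algebraMap (NagataRing R) (FractionRing (NagataRing R))
                (IsLocalization.mk' (NagataRing R) q t) * ψ (t : Polynomial R)
                * (ψ (Polynomial.C b) * ψ (Polynomial.C (e : R)) * ψ (s : Polynomial R)) := by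
                rw [hqt, hh₁]
          _ = ψ q * (ψ (Polynomial.C b) * ψ (Polynomial.C (e : R)) * ψ (s : Polynomial R)) := by
                rw [hmk]
          _ = ψ (Polynomial.C (b * (e : R)) * (q * (s : Polynomial R))) := by
                simp only [map_mul]; ring
      have e3 : P * Polynomial.C c * (t : Polynomial R)
          = Polynomial.C (b * (e : R)) * (q * (s : Polynomial R)) := hψinj key
      have hdvd : ∀ n', b * (e : R) ∣ (P * Polynomial.C c).coeff n' := by
        refine dvd_coeff_of_dvd_coeff_mul _ _ _ (content_top_of_mem_nagataSubmonoid t.2) ?_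
        intro n'
        rw [e3, Polynomial.coeff_C_mul]
        exact Dvd.intro _ rfl
      obtain ⟨w, hw⟩ := hdvd n
      rw [Polynomial.coeff_mul_C] at hw
      refine Submodule.mem_one.mpr ⟨w, ?_⟩
      have hkey : algebraMap R (FractionRing R) (P.coeff n) * m
          = algebraMap R (FractionRing R) w * algebraMap R (FractionRing R) b := by
        apply mul_right_cancel₀ he
        calc algebraMap R (FractionRing R) (P.coeff n) * m * algebraMap R (FractionRing R) (e:R)
            = algebraMap R (FractionRing R) (P.coeff n) * algebraMap R (FractionRing R) c := by
              rw [mul_assoc, ece]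
          _ = algebraMap R (FractionRing R) (P.coeff n * c) := by rw [map_mul]
          _ = algebraMap R (FractionRing R) (b * (e : R) * w) := by rw [hw]
          _ = algebraMap R (FractionRing R) w * algebraMap R (FractionRing R) b
              * algebraMap R (FractionRing R) (e : R) := by rw [map_mul, map_mul]; ring
      field_simp
      linear_combination -hkey
    have claimB : x = ∑ n ∈ Finset.range (P.natDegree + 1),
        (IsLocalization.mk' (NagataRing R) ((Polynomial.X : Polynomial R) ^ n) s)
          • (φ ((algebraMap R (FractionRing R) (P.coeff n))
              / (algebraMap R (FractionRing R) b))) := by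
      have hψCb : ψ (Polynomial.C b) ≠ 0 := by
        intro h
        exact hb (by simpa using hψinj (h.trans (map_zero ψ).symm))
      have hD : ψ (Polynomial.C b) * ψ (s : Polynomial R) ≠ 0 := mul_ne_zero hψCb (hψs_ne s)
      have hterm : ∀ n, (IsLocalization.mk' (NagataRing R) ((Polynomial.X : Polynomial R) ^ n) s)
          • (φ ((algebraMap R (FractionRing R) (P.coeff n))
              / (algebraMap R (FractionRing R) b)))
          = ψ (Polynomial.C (P.coeff n) * Polynomial.X ^ n)
              / (ψ (Polynomial.C b) * ψ (s : Polynomial R)) := by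
        intro n
        have hsmul : ∀ (a : NagataRing R) (l : FractionRing (NagataRing R)),
            a • l = algebraMap (NagataRing R) (FractionRing (NagataRing R)) a * l :=
          fun a l => Algebra.smul_def a l
        rw [hsmul, map_div₀, hφC, hφC]
        have h1 : algebraMap (NagataRing R) (FractionRing (NagataRing R))
            (IsLocalization.mk' (NagataRing R) ((Polynomial.X : Polynomial R) ^ n) s)
            = ψ ((Polynomial.X : Polynomial R) ^ n) / ψ (s : Polynomial R) := by
          rw [eq_div_iff (hψs_ne s)]; exact hmk _ s
        rw [h1, div_mul_div_comm, map_mul]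
        ring
      rw [eq_comm]
      calc _ = ∑ n ∈ Finset.range (P.natDegree + 1),
            ψ (Polynomial.C (P.coeff n) * Polynomial.X ^ n)
              / (ψ (Polynomial.C b) * ψ (s : Polynomial R)) :=
            Finset.sum_congr rfl fun n _ => hterm n
        _ = (∑ n ∈ Finset.range (P.natDegree + 1),
            ψ (Polynomial.C (P.coeff n) * Polynomial.X ^ n))
              / (ψ (Polynomial.C b) * ψ (s : Polynomial R)) := by
            rw [← Finset.sum_div]
        _ = ψ P / (ψ (Polynomial.C b) * ψ (s : Polynomial R)) := by
            rw [← map_sum]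
            congr 1
            congr 1
            rw [eq_comm]
            calc P = ∑ n ∈ Finset.range (P.natDegree + 1), Polynomial.monomial n (P.coeff n) :=
                  P.as_sum_range' _ (Nat.lt_succ_self _)
              _ = ∑ n ∈ Finset.range (P.natDegree + 1), Polynomial.C (P.coeff n)
                    * Polynomial.X ^ n := by
                  exact Finset.sum_congr rfl fun n _ => (Polynomial.C_mul_X_pow_eq_monomial).symm
        _ = x := by
            rw [eq_comm, eq_div_iff hD, ← master]; ring
    rw [claimB]
    exact Submodule.sum_mem _ fun n _ => Submodule.smul_mem _ _
      (Submodule.subset_span ⟨_, claimA n, rfl⟩)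
  · -- easy direction
    rw [Submodule.span_le]
    rintro _ ⟨z, hzmem, rfl⟩
    rw [SetLike.mem_coe, Submodule.mem_div_iff_forall_mul_mem]
    have hsub : Submodule.span (NagataRing R) (φ '' M)
        ≤ Submodule.comap (LinearMap.mulLeft (NagataRing R) (φ z)) 1 := by
      rw [Submodule.span_le]
      rintro _ ⟨m, hm, rfl⟩
      simp only [SetLike.mem_coe, Submodule.mem_comap, LinearMap.mulLeft_apply]
      rw [← map_mul]
      have hzm : z * m ∈ (1 : Submodule R (FractionRing R)) := by
        rw [SetLike.mem_coe, Submodule.mem_div_iff_forall_mul_mem] at hzmem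
        exact hzmem m hm
      obtain ⟨r, hr⟩ := Submodule.mem_one.mp hzm
      rw [← hr, hφ]
      exact Submodule.algebraMap_mem _
    intro y hy
    simpa using hsub hy

/-- extension of the coeIdeal. -/
theorem coe_map_eq_span {R : Type*} [CommRing R] [IsDomain R] (I : Ideal R)
    (φ : FractionRing R →+* FractionRing (NagataRing R))
    (hφ : ∀ r : R, φ (algebraMap R (FractionRing R) r)
        = algebraMap (NagataRing R) (FractionRing (NagataRing R)) (nagataMap R r)) :
    (((I.map (nagataMap R) : Ideal (NagataRing R)) :
        FractionalIdeal (nonZeroDivisors (NagataRing R)) (FractionRing (NagataRing R))) :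
        Submodule (NagataRing R) (FractionRing (NagataRing R)))
      = Submodule.span (NagataRing R)
          (φ '' ((I : FractionalIdeal (nonZeroDivisors R) (FractionRing R)) : Set (FractionRing R))) := by
  have h2 : ((I : FractionalIdeal (nonZeroDivisors R) (FractionRing R)) : Set (FractionRing R))
      = algebraMap R (FractionRing R) '' (I : Set R) := by
    ext x
    simp only [SetLike.mem_coe, FractionalIdeal.mem_coeIdeal, Set.mem_image]
  rw [FractionalIdeal.coe_coeIdeal, h2, Set.image_image]
  have h1 : (I.map (nagataMap R) : Ideal (NagataRing R))
      = Ideal.span ((nagataMap R) '' (I : Set R)) := rfl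
  rw [IsLocalization.coeSubmodule, h1]
  have : (Ideal.span ((nagataMap R) '' (I : Set R)) : Submodule (NagataRing R) (NagataRing R))
      = Submodule.span (NagataRing R) ((nagataMap R) '' (I : Set R)) := rfl
  rw [this, Submodule.map_span]
  rw [← Set.image_comp]
  congr 1
  refine Set.image_congr fun x _ => ?_
  simp only [Function.comp_apply, Algebra.linearMap_apply]
  rw [hφ x]

/-- Bridge between the two set coercions of a fractional ideal. -/
theorem fracSetCoe {R : Type*} [CommRing R] {S : Submonoid R} {P : Type*} [CommRing P]
    [Algebra R P] (F : FractionalIdeal S P) :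
    (F : Set P) = ((F : Submodule R P) : Set P) := rfl


set_option maxHeartbeats 3000000 in
/-- For a nonzero ideal `I` of a domain `R`, `(R(X) : I R(X)) = (R : I) R(X)`;
consequently `I` is divisorial in `R` iff `I R(X)` is divisorial in `R(X)`.
Here `φ` is the (unique) embedding of quotient fields compatible with `R → R(X)`. -/
theorem nagata_dual_and_divisorial (R : Type*) [CommRing R] [IsDomain R]
    (I : Ideal R) (hI : I ≠ ⊥)
    (φ : FractionRing R →+* FractionRing (NagataRing R))
    (hφ : ∀ r : R, φ (algebraMap R (FractionRing R) r)
        = algebraMap (NagataRing R) (FractionRing (NagataRing R)) (nagataMap R r)) :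
    (((1 / ((I.map (nagataMap R) : Ideal (NagataRing R)) :
        FractionalIdeal (nonZeroDivisors (NagataRing R)) (FractionRing (NagataRing R)))) :
        FractionalIdeal (nonZeroDivisors (NagataRing R)) (FractionRing (NagataRing R))) :
        Submodule (NagataRing R) (FractionRing (NagataRing R)))
      = Submodule.span (NagataRing R)
          (φ '' (((1 / (I : FractionalIdeal (nonZeroDivisors R) (FractionRing R))) :
            FractionalIdeal (nonZeroDivisors R) (FractionRing R)) : Set (FractionRing R)))
    ∧ (IsDivisorial R I ↔ IsDivisorial (NagataRing R) (I.map (nagataMap R))) := by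
  set F : FractionalIdeal (nonZeroDivisors R) (FractionRing R) :=
    (I : FractionalIdeal (nonZeroDivisors R) (FractionRing R)) with hFdef
  set G : FractionalIdeal (nonZeroDivisors (NagataRing R)) (FractionRing (NagataRing R)) :=
    ((I.map (nagataMap R) : Ideal (NagataRing R)) :
      FractionalIdeal (nonZeroDivisors (NagataRing R)) (FractionRing (NagataRing R))) with hGdef
  have hF0 : F ≠ 0 := FractionalIdeal.coeIdeal_ne_zero.mpr hI
  have hJbot : I.map (nagataMap R) ≠ ⊥ := by
    obtain ⟨a, haI, ha⟩ := (Submodule.ne_bot_iff I).mp hI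
    intro h
    have hmem : nagataMap R a ∈ I.map (nagataMap R) := Ideal.mem_map_of_mem _ haI
    rw [h, Ideal.mem_bot] at hmem
    apply ha
    have hinj : Function.Injective (nagataMap R) :=
      (IsLocalization.injective (NagataRing R) (nagataSubmonoid_le_nonZeroDivisors R)).comp
        (Polynomial.C_injective)
    exact hinj (hmem.trans (map_zero (nagataMap R)).symm)
  have hG0 : G ≠ 0 := FractionalIdeal.coeIdeal_ne_zero.mpr hJbot
  have h1F0 : (1 / F : FractionalIdeal _ _) ≠ 0 := by
    intro h
    have h1 : (1 : FractionalIdeal (nonZeroDivisors R) (FractionRing R)) ≤ 1 / F := by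
      rw [FractionalIdeal.le_div_iff_mul_le hF0, one_mul]
      exact FractionalIdeal.coeIdeal_le_one
    rw [h] at h1
    exact one_ne_zero (le_antisymm h1 (FractionalIdeal.zero_le _))
  have h1G0 : (1 / G : FractionalIdeal _ _) ≠ 0 := by
    intro h
    have h1 : (1 : FractionalIdeal (nonZeroDivisors (NagataRing R)) (FractionRing (NagataRing R)))
        ≤ 1 / G := by
      rw [FractionalIdeal.le_div_iff_mul_le hG0, one_mul]
      exact FractionalIdeal.coeIdeal_le_one
    rw [h] at h1
    exact one_ne_zero (le_antisymm h1 (FractionalIdeal.zero_le _))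
  have hFsub : (F : Submodule R (FractionRing R)) ≠ ⊥ :=
    fun h => hF0 (FractionalIdeal.coeToSubmodule_eq_bot.mp h)
  have h1Fsub : ((1 / F : FractionalIdeal _ _) : Submodule R (FractionRing R)) ≠ ⊥ :=
    fun h => h1F0 (FractionalIdeal.coeToSubmodule_eq_bot.mp h)
  have hsub1F : ((1 : Submodule R (FractionRing R)) / (F : Submodule R (FractionRing R)))
      = ((1 / F : FractionalIdeal _ _) : Submodule R (FractionRing R)) := by
    rw [FractionalIdeal.coe_div hF0, FractionalIdeal.coe_one]
  have part1 : ((1 / G : FractionalIdeal _ _) :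
      Submodule (NagataRing R) (FractionRing (NagataRing R)))
      = Submodule.span (NagataRing R)
          (φ '' ((1 / F : FractionalIdeal _ _) : Set (FractionRing R))) := by
    calc ((1 / G : FractionalIdeal _ _) :
          Submodule (NagataRing R) (FractionRing (NagataRing R)))
        = 1 / (G : Submodule (NagataRing R) (FractionRing (NagataRing R))) := by
          rw [FractionalIdeal.coe_div hG0, FractionalIdeal.coe_one]
      _ = 1 / Submodule.span (NagataRing R) (φ '' (F : Set (FractionRing R))) := by
          rw [hGdef, coe_map_eq_span I φ hφ]
      _ = 1 / Submodule.span (NagataRing R)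
            (φ '' ((F : Submodule R (FractionRing R)) : Set (FractionRing R))) := by
          rw [fracSetCoe]
      _ = Submodule.span (NagataRing R)
            (φ '' ((1 : Submodule R (FractionRing R)) / (F : Submodule R (FractionRing R)))) :=
          nagata_div_span φ hφ _ hFsub
      _ = Submodule.span (NagataRing R)
            (φ '' ((1 / F : FractionalIdeal _ _) : Set (FractionRing R))) := by
          rw [fracSetCoe (1 / F), hsub1F]
  have s1 : ((1 / (1 / G) : FractionalIdeal _ _) :
      Submodule (NagataRing R) (FractionRing (NagataRing R)))
      = 1 / ((1 / G : FractionalIdeal _ _) :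
          Submodule (NagataRing R) (FractionRing (NagataRing R))) := by
    rw [FractionalIdeal.coe_div h1G0, FractionalIdeal.coe_one]
  have s4 : (1 : Submodule (NagataRing R) (FractionRing (NagataRing R))) / Submodule.span (NagataRing R)
            (φ '' (((1 / F : FractionalIdeal _ _) : Submodule R (FractionRing R)) :
              Set (FractionRing R)))
      = Submodule.span (NagataRing R)
            (φ '' ((1 : Submodule R (FractionRing R))
              / ((1 / F : FractionalIdeal _ _) : Submodule R (FractionRing R)))) :=
    nagata_div_span φ hφ _ h1Fsub
  have part2 : ((1 / (1 / G) : FractionalIdeal _ _) :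
      Submodule (NagataRing R) (FractionRing (NagataRing R)))
      = Submodule.span (NagataRing R)
          (φ '' ((1 / (1 / F) : FractionalIdeal _ _) : Set (FractionRing R))) := by
    rw [s1, part1, fracSetCoe (1 / F), s4, fracSetCoe (1 / (1 / F)),
      FractionalIdeal.coe_div h1F0, FractionalIdeal.coe_one]
  refine ⟨part1, ?_⟩
  constructor
  · intro hIdiv
    have hIdiv' : (1 / (1 / F) : FractionalIdeal _ _) = F := hIdiv
    show (1 / (1 / G) : FractionalIdeal _ _) = G
    apply FractionalIdeal.coeToSubmodule_injective
    show ((1 / (1 / G) : FractionalIdeal _ _) :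
        Submodule (NagataRing R) (FractionRing (NagataRing R)))
      = (G : Submodule (NagataRing R) (FractionRing (NagataRing R)))
    rw [part2, hIdiv', hGdef, coe_map_eq_span I φ hφ, hFdef]
  · intro hJdiv
    have hJdiv' : (1 / (1 / G) : FractionalIdeal _ _) = G := hJdiv
    show (1 / (1 / F) : FractionalIdeal _ _) = F
    refine le_antisymm ?_ ?_
    · intro z hz
      have h1 : φ z ∈ ((1 / (1 / G) : FractionalIdeal _ _) :
          Submodule (NagataRing R) (FractionRing (NagataRing R))) := by
        rw [part2]
        exact Submodule.subset_span ⟨z, hz, rfl⟩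
      rw [hJdiv'] at h1
      exact contraction I φ hφ z (FractionalIdeal.mem_coe.mp h1)
    · rw [FractionalIdeal.le_div_iff_mul_le h1F0]
      exact FractionalIdeal.mul_one_div_le_one
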